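/- Let M be a faithful R-module (i.e., Ann_R(M) = 0). If N is a weakly classical 1-absorbing prime submodule of M, then (N :_R M) is a weakly 1-absorbing prime ideal of R. -/
import Mathlib


/-- A proper submodule `N` of `M` is weakly classical 1-absorbing prime if whenever
`abcm ∈ N` and `abcm ≠ 0` for nonunits `a, b, c ∈ R` and `m ∈ M`, then `abm ∈ N` or `cm ∈ N`. -/
def IsWeaklyClassical1AbsorbingPrime {R : Type*} [CommRing R] {M : Type*} [AddCommGroup M]
    [Module R M] (N : Submodule R M) : Prop :=
  N ≠ ⊤ ∧ ∀ a b c : R, ∀ m : M, ¬ IsUnit a → ¬ IsUnit b → ¬ IsUnit c →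
    (a * b * c) • m ∈ N → (a * b * c) • m ≠ 0 → ((a * b) • m ∈ N ∨ c • m ∈ N)

/-- A proper ideal `I` of `R` is weakly 1-absorbing prime if whenever `abc ∈ I` and
`abc ≠ 0` for nonunits `a, b, c ∈ R`, then `ab ∈ I` or `c ∈ I`. -/
def IsWeakly1AbsorbingPrimeIdeal {R : Type*} [CommRing R] (I : Ideal R) : Prop :=
  I ≠ ⊤ ∧ ∀ a b c : R, ¬ IsUnit a → ¬ IsUnit b → ¬ IsUnit c →
    a * b * c ∈ I → a * b * c ≠ 0 → (a * b ∈ I ∨ c ∈ I)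

/-- If `M` is a faithful `R`-module and `N` is a weakly classical
1-absorbing prime submodule of `M`, then `(N :_R M)` is a weakly 1-absorbing prime ideal
of `R`. -/
theorem stmt_18 {R : Type*} [CommRing R] [Nontrivial R] {M : Type*} [AddCommGroup M]
    [Module R M] [Nontrivial M] (hfaith : ∀ x : R, (∀ m : M, x • m = 0) → x = 0)
    (N : Submodule R M) (hN : IsWeaklyClassical1AbsorbingPrime N) :
    IsWeakly1AbsorbingPrimeIdeal (N.colon ⊤) := by
  obtain ⟨hNtop, hN2⟩ := hN
  constructor
  · intro h
    apply hNtop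
    rw [eq_top_iff]
    intro m _
    have h1 : (1 : R) ∈ N.colon ⊤ := h ▸ Submodule.mem_top
    simpa using Submodule.mem_colon.mp h1 m trivial
  · intro a b c ha hb hc habc hne
    by_contra hcon
    push_neg at hcon
    obtain ⟨hab, hc2⟩ := hcon
    have hcol : ∀ m : M, (a * b * c) • m ∈ N :=
      fun m => Submodule.mem_colon.mp habc m trivial
    have hab' : ¬ IsUnit (a * b) := fun h => ha (isUnit_of_mul_isUnit_left h)
    -- a witness where abc acts nontrivially
    obtain ⟨m0, hm0⟩ : ∃ m : M, (a * b * c) • m ≠ 0 := by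
      by_contra h; push_neg at h; exact hne (hfaith _ h)
    obtain ⟨m1', hm1'⟩ : ∃ m : M, (a * b) • m ∉ N := by
      by_contra h; push_neg at h
      exact hab (Submodule.mem_colon.mpr fun m _ => h m)
    obtain ⟨m2', hm2'⟩ : ∃ m : M, c • m ∉ N := by
      by_contra h; push_neg at h
      exact hc2 (Submodule.mem_colon.mpr fun m _ => h m)
    -- normalize witnesses so that abc acts nontrivially on them
    obtain ⟨m1, h1, h1t⟩ : ∃ m : M, (a * b) • m ∉ N ∧ (a * b * c) • m ≠ 0 := by
      by_cases h : (a * b * c) • m1' = 0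
      · by_cases h' : (a * b) • (m1' + m0) ∈ N
        · refine ⟨m0, fun hh => hm1' ?_, hm0⟩
          have := N.sub_mem h' hh
          simpa [smul_add] using this
        · refine ⟨m1' + m0, h', ?_⟩
          rw [smul_add, h, zero_add]; exact hm0
      · exact ⟨m1', hm1', h⟩
    obtain ⟨m2, h2, h2t⟩ : ∃ m : M, c • m ∉ N ∧ (a * b * c) • m ≠ 0 := by
      by_cases h : (a * b * c) • m2' = 0
      · by_cases h' : c • (m2' + m0) ∈ N
        · refine ⟨m0, fun hh => hm2' ?_, hm0⟩
          have := N.sub_mem h' hh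
          simpa [smul_add] using this
        · refine ⟨m2' + m0, h', ?_⟩
          rw [smul_add, h, zero_add]; exact hm0
      · exact ⟨m2', hm2', h⟩
    set t : M := (a * b * c) • m1 with ht
    have htN : t ∈ N := hcol m1
    have hcm1 : c • m1 ∈ N := (hN2 a b c m1 ha hb hc (hcol m1) h1t).resolve_left h1
    have habm2 : (a * b) • m2 ∈ N := (hN2 a b c m2 ha hb hc (hcol m2) h2t).resolve_right h2
    -- step 3 : abc • m2 = -t
    have h3 : (a * b * c) • m2 = -t := by
      by_contra hx
      have hnz : (a * b * c) • (m1 + m2) ≠ 0 := by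
        rw [smul_add, ← ht]
        intro h0
        exact hx (by rw [← zero_sub t, ← h0]; abel)
      rcases hN2 a b c (m1 + m2) ha hb hc (hcol _) hnz with h | h
      · rw [smul_add] at h
        exact h1 (by simpa using N.sub_mem h habm2)
      · rw [smul_add] at h
        exact h2 (by simpa using N.sub_mem h hcm1)
    -- family F1
    have hF1 : ∀ r : R, (r - 1) • t ≠ 0 → r • ((a * b) • m1) ∈ N := by
      intro r hr
      have hkey : (a * b * c) • (m2 + r • m1) = (r - 1) • t := by
        rw [smul_add, h3, smul_comm, ← ht, sub_smul, one_smul]; abel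
      rcases hN2 a b c (m2 + r • m1) ha hb hc (hcol _) (by rw [hkey]; exact hr) with h | h
      · rw [smul_add, smul_comm] at h
        simpa using N.sub_mem h habm2
      · rw [smul_add, smul_comm] at h
        exact absurd (by simpa using N.sub_mem h (N.smul_mem r hcm1)) h2
    -- family F2
    have hF2 : ∀ r : R, (1 - r) • t ≠ 0 → r • (c • m2) ∈ N := by
      intro r hr
      have hkey : (a * b * c) • (m1 + r • m2) = (1 - r) • t := by
        rw [smul_add, smul_comm, h3, ← ht, sub_smul, one_smul, smul_neg]; abel
      rcases hN2 a b c (m1 + r • m2) ha hb hc (hcol _) (by rw [hkey]; exact hr) with h | h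
      · rw [smul_add, smul_comm] at h
        exact absurd (by simpa using N.sub_mem h (N.smul_mem r habm2)) h1
      · rw [smul_add, smul_comm] at h
        simpa using N.sub_mem h hcm1
    -- dichotomy : r • t = 0 or r • t = t
    have h5 : ∀ r : R, r • t = 0 ∨ r • t = t := by
      intro r
      by_contra hx
      push_neg at hx
      obtain ⟨hx0, hxt⟩ := hx
      have e1 : (r - 1) • t ≠ 0 := by
        rw [sub_smul, one_smul]; exact sub_ne_zero.mpr hxt
      have e2 : ((r + 1) - 1) • t ≠ 0 := by simpa using hx0
      have := N.sub_mem (hF1 (r + 1) e2) (hF1 r e1)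
      apply h1
      simpa [add_smul] using this
    -- lemma L : annihilator of t sends u and v into N
    have hL : ∀ z : R, z • t = 0 → z • ((a * b) • m1) ∈ N ∧ z • (c • m2) ∈ N := by
      intro z hz
      constructor
      · apply hF1
        rw [sub_smul, one_smul, hz, zero_sub]
        exact neg_ne_zero.mpr h1t
      · apply hF2
        rw [sub_smul, one_smul, hz, sub_zero]
        exact h1t
    have hcu : c • ((a * b) • m1) = t := by
      rw [smul_smul, ht, mul_comm]
    have hcA : c • t = 0 := by
      rcases h5 c with h | h
      · exact h
      exfalso
      have hzero : (c - 1) • t = 0 := by rw [sub_smul, one_smul, h, sub_self]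
      have hm := (hL (c - 1) hzero).1
      rw [sub_smul, one_smul, hcu] at hm
      exact h1 (by simpa using N.sub_mem htN hm)
    have habv : (a * b) • (c • m2) = -t := by
      rw [smul_smul]; exact h3
    have habA : (a * b) • t = 0 := by
      rcases h5 (a * b) with h | h
      · exact h
      exfalso
      have hzero : (a * b - 1) • t = 0 := by rw [sub_smul, one_smul, h, sub_self]
      have hm := (hL (a * b - 1) hzero).2
      rw [sub_smul, one_smul, habv] at hm
      exact h2 (by simpa using N.sub_mem (N.neg_mem htN) hm)
    -- final blow with z = a*b + c
    have hzt : (a * b + c) • t = 0 := by rw [add_smul, habA, hcA, add_zero]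
    have hzu : (a * b + c) • ((a * b) • m1) ∈ N := (hL _ hzt).1
    by_cases hz0 : (a * b + c) • ((a * b) • m1) = 0
    · have habu : (a * b) • ((a * b) • m1) = -t := by
        have hsum : (a * b) • ((a * b) • m1) + c • ((a * b) • m1) = 0 := by
          rw [← add_smul]; exact hz0
        rw [hcu] at hsum
        rw [← zero_sub t, ← hsum]; abel
      have hmem : (a * b * (a * b)) • m1 ∈ N := by
        rw [mul_smul, habu]; exact N.neg_mem htN
      have hne2 : (a * b * (a * b)) • m1 ≠ 0 := by
        rw [mul_smul, habu]; exact neg_ne_zero.mpr h1t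
      rcases hN2 a b (a * b) m1 ha hb hab' hmem hne2 with h | h
      · exact h1 h
      · exact h1 h
    · have hnonunit : ¬ IsUnit (a * b + c) := by
        intro hu
        obtain ⟨w, hw⟩ := hu
        apply h1t
        have h0 : (w : R) • t = 0 := by rw [hw]; exact hzt
        have := congrArg (fun x => ((↑w⁻¹ : R)) • x) h0
        simpa [smul_smul] using this
      have hmem : (a * b * (a * b + c)) • m1 ∈ N := by
        rw [mul_smul, smul_comm]; exact hzu
      have hne2 : (a * b * (a * b + c)) • m1 ≠ 0 := by
        rw [mul_smul, smul_comm]; exact hz0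
      rcases hN2 a b (a * b + c) m1 ha hb hnonunit hmem hne2 with h | h
      · exact h1 h
      · rw [add_smul] at h
        exact h1 (by simpa using N.sub_mem h hcm1)
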